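/- Let X be a set, h : X → ℝ bounded below, (f_i) self-maps of X with integers d_i ≥ 2 and uniform bound c on |h(f_i(x))/d_i − h(x)|. Suppose moreover that for every real number M the sublevel set {y ∈ X : h(y) ≤ M} is finite (Northcott property). Then for x ∈ X, the canonical height ĥ(x) = 0 if and only if the forward orbit {x, f_1(x), f_2(f_1(x)), …} is finite. -/

import Mathlib

open Filter Finset

/-- `orbitFrom f k n x = f (k+n) (⋯ (f (k+1) x))`, the composite applying `f (k+1)` first. -/
def orbitFrom {X : Type*} (f : ℕ → X → X) (k : ℕ) : ℕ → X → X
  | 0 => fun x => x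
  | n + 1 => fun x => f (k + n + 1) (orbitFrom f k n x)

/-- `prodFrom d k n = d (k+1) * ⋯ * d (k+n)`. -/
def prodFrom (d : ℕ → ℕ) (k n : ℕ) : ℕ := ∏ i ∈ Finset.range n, d (k + i + 1)

lemma prodFrom_pos (d : ℕ → ℕ) (hd : ∀ i, 2 ≤ d i) (k n : ℕ) : 0 < prodFrom d k n :=
  Finset.prod_pos fun i _ => lt_of_lt_of_le two_pos (hd _)

lemma two_pow_le_prodFrom (d : ℕ → ℕ) (hd : ∀ i, 2 ≤ d i) (k n : ℕ) :
    2 ^ n ≤ prodFrom d k n := by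
  calc (2:ℕ)^n = ∏ _i ∈ Finset.range n, 2 := by simp
  _ ≤ _ := Finset.prod_le_prod' fun i _ => hd _

lemma prodFrom_succ (d : ℕ → ℕ) (n : ℕ) :
    prodFrom d 0 (n + 1) = prodFrom d 0 n * d (n + 1) := by
  simp [prodFrom, Finset.prod_range_succ]

theorem stmt7 {X : Type*} (h : X → ℝ) (f : ℕ → X → X) (d : ℕ → ℕ)
    (hd : ∀ i, 2 ≤ d i) (c : ℝ) (hc : 0 ≤ c)
    (hb : ∀ i x, |h (f i x) / (d i : ℝ) - h x| ≤ c)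
    (hbelow : ∃ m : ℝ, ∀ y, m ≤ h y)
    (hNorthcott : ∀ M : ℝ, {y : X | h y ≤ M}.Finite) (x : X) (L : ℝ)
    (hL : Tendsto (fun n => h (orbitFrom f 0 n x) / (prodFrom d 0 n : ℝ)) atTop (nhds L)) :
    L = 0 ↔ (Set.range fun n => orbitFrom f 0 n x).Finite := by
  set y : ℕ → X := fun n => orbitFrom f 0 n x with hy
  set P : ℕ → ℝ := fun n => (prodFrom d 0 n : ℝ) with hP
  set a : ℕ → ℝ := fun n => h (y n) / P n with ha
  have hPpos : ∀ n, 0 < P n := fun n => by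
    show (0:ℝ) < (prodFrom d 0 n : ℝ)
    exact_mod_cast prodFrom_pos d hd 0 n
  have hPpow : ∀ n, (2:ℝ)^n ≤ P n := fun n => by
    show (2:ℝ)^n ≤ (prodFrom d 0 n : ℝ)
    exact_mod_cast two_pow_le_prodFrom d hd 0 n
  have hPsucc : ∀ n, P (n+1) = P n * d (n+1) := fun n => by
    simp [hP, prodFrom_succ]
  have hdR : ∀ i, (2:ℝ) ≤ (d i : ℝ) := fun i => by exact_mod_cast hd i
  have hysucc : ∀ n, y (n+1) = f (n+1) (y n) := fun n => by
    simp [hy, orbitFrom]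
  -- step bound
  have hstep : ∀ n, |a (n+1) - a n| ≤ c / P n := by
    intro n
    have heq : a (n+1) - a n = (h (f (n+1) (y n)) / (d (n+1) : ℝ) - h (y n)) / P n := by
      show h (y (n+1)) / P (n+1) - h (y n) / P n = _
      rw [hysucc, hPsucc, div_mul_eq_div_div_swap, sub_div]
    rw [heq, abs_div, abs_of_pos (hPpos n)]
    gcongr
    exact hb _ _
  -- telescoping bound
  have key : ∀ n m, |a (n+m) - a n| ≤ 2*c/P n - 2*c/P (n+m) := by
    intro n m
    induction m with
    | zero => simp
    | succ m ih =>
      have h1 : |a (n+(m+1)) - a n| ≤ |a (n+m+1) - a (n+m)| + |a (n+m) - a n| := by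
        have := abs_sub_le (a (n+m+1)) (a (n+m)) (a n)
        simpa [add_assoc] using this
      have h2 : 2*c/P (n+m+1) ≤ c / P (n+m) := by
        have hdp : (0:ℝ) < d (n+m+1) := lt_of_lt_of_le two_pos (hdR _)
        rw [hPsucc (n+m), div_le_div_iff₀ (mul_pos (hPpos _) hdp) (hPpos _)]
        nlinarith [mul_le_mul_of_nonneg_left (hdR (n+m+1))
          (mul_nonneg hc (hPpos (n+m)).le)]
      calc |a (n+(m+1)) - a n| ≤ c / P (n+m) + (2*c/P n - 2*c/P (n+m)) :=
            h1.trans (add_le_add (hstep (n+m)) ih)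
        _ ≤ 2*c/P n - 2*c/P (n+(m+1)) := by
            have e1 : 2*c/P (n+m) = 2*(c/P (n+m)) := by ring
            have e2 : 2*c/P (n+m+1) = 2*(c/P (n+m+1)) := by ring
            have h3 : c / P (n+m) - 2*c/P (n+m) ≤ - (2*c/P (n+m+1)) := by
              have h4 : 0 ≤ c/P (n+m+1) := by positivity
              linarith
            have : n + (m+1) = n + m + 1 := by ring
            rw [this]; linarith
  have hlim : ∀ n, |L - a n| ≤ 2*c/P n := by
    intro n
    have htend : Tendsto (fun m => |a (n+m) - a n|) atTop (nhds (|L - a n|)) := by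
      have h1 : Tendsto (fun m => a (n+m)) atTop (nhds L) := by
        have := hL.comp (tendsto_add_atTop_nat n)
        simpa [Function.comp_def, add_comm] using this
      exact ((h1.sub tendsto_const_nhds).abs)
    refine le_of_tendsto htend (Filter.Eventually.of_forall fun m => ?_)
    exact (key n m).trans (by
      have : 0 ≤ 2*c/P (n+m) := by positivity
      linarith)
  constructor
  · intro hL0
    have hbd : ∀ n, h (y n) ≤ 2*c := by
      intro n
      have := hlim n
      rw [hL0] at this
      have h1 : |a n| ≤ 2*c/P n := by simpa [abs_sub_comm] using this
      have h2 : h (y n) / P n ≤ 2*c/P n := (abs_le.mp h1).2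
      exact (div_le_div_iff_of_pos_right (hPpos n)).mp h2
    apply (hNorthcott (2*c)).subset
    rintro _ ⟨n, rfl⟩
    exact hbd n
  · intro hfin
    obtain ⟨m', hm'⟩ := hbelow
    obtain ⟨M, hM⟩ := (hfin.image h).bddAbove
    set C : ℝ := max M (-m') with hC
    have hup : ∀ n, h (y n) ≤ C := fun n =>
      le_max_of_le_left (hM (Set.mem_image_of_mem h (Set.mem_range_self n)))
    have hlowC : -C ≤ m' := neg_le.mp (le_max_right M (-m'))
    have habs : ∀ n, |h (y n)| ≤ C := fun n =>
      abs_le.mpr ⟨hlowC.trans (hm' (y n)), hup n⟩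
    have hC0 : 0 ≤ C := le_trans (abs_nonneg _) (habs 0)
    have h0 : Tendsto a atTop (nhds 0) := by
      refine squeeze_zero_norm (a := fun n => C / 2^n) (fun n => ?_) ?_
      · 
        have : |a n| = |h (y n)| / P n := by
          rw [ha, abs_div, abs_of_pos (hPpos n)]
        rw [Real.norm_eq_abs, this]
        exact div_le_div₀ hC0 (habs n) (by positivity) (hPpow n)
      · have : Tendsto (fun n : ℕ => C * (1/2:ℝ)^n) atTop (nhds (C * 0)) :=
          (tendsto_pow_atTop_nhds_zero_of_lt_one (by norm_num) (by norm_num)).const_mul C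
        simpa [div_eq_mul_inv, div_pow] using this
    exact tendsto_nhds_unique hL h0
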